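/- Let X be a finite linearly ordered set, let I ⊆ X be an interval (a set of consecutive elements of X), and fix i ∈ I. Let π be a partition of the set (X ∖ I) ∪ {i} that is non-crossing with respect to the order inherited from X. Then the partition of X obtained from π by replacing the block S containing i with S ∪ I (leaving all other blocks unchanged) is non-crossing with respect to the order of X. -/
import Mathlib


/-- `P` is a partition of the set `Y`: its blocks are nonempty, pairwise
disjoint, and their union is `Y`. -/
def IsPartitionOn {α : Type*} (Y : Set α) (P : Set (Set α)) : Prop :=
  (∀ S ∈ P, S.Nonempty) ∧ (∀ S ∈ P, ∀ T ∈ P, S ≠ T → Disjoint S T) ∧ ⋃₀ P = Y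

/-- Two blocks `A` and `B` cross (with respect to a strict order `lt` on the
ground set) if there are `a1, a2 ∈ A` and `b1, b2 ∈ B` with
`a1 < b1 < a2 < b2` or `b1 < a1 < b2 < a2`. -/
def Crosses {α : Type*} (lt : α → α → Prop) (A B : Set α) : Prop :=
  ∃ a1 ∈ A, ∃ a2 ∈ A, ∃ b1 ∈ B, ∃ b2 ∈ B,
    (lt a1 b1 ∧ lt b1 a2 ∧ lt a2 b2) ∨ (lt b1 a1 ∧ lt a1 b2 ∧ lt b2 a2)

/-- A family of blocks is non-crossing for `lt` if no two of its blocks cross. -/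
def NonCrossingFam {α : Type*} (lt : α → α → Prop) (P : Set (Set α)) : Prop :=
  ∀ A ∈ P, ∀ B ∈ P, A ≠ B → ¬ Crosses lt A B

/-- `I` is an interval of a linearly ordered set: there is no element strictly
between two elements of `I` that is outside `I`. -/
def IsInterval {α : Type*} [LT α] (I : Set α) : Prop :=
  ∀ a1 ∈ I, ∀ a2 ∈ I, ∀ b, a1 < b → b < a2 → b ∈ I

/-- Let `X` be a finite linearly ordered set, `I ⊆ X` an interval and `i ∈ I`.
Let `π` be a partition of `(X ∖ I) ∪ {i}` that is non-crossing for the order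
inherited from `X`. Then the partition of `X` obtained from `π` by replacing
the block `S` containing `i` with `S ∪ I` (leaving all other blocks unchanged)
is non-crossing for the order of `X`. -/

private lemma crosses_symm {α : Type*} {lt : α → α → Prop} {A B : Set α}
    (h : Crosses lt A B) : Crosses lt B A := by
  obtain ⟨a1, h1, a2, h2, b1, h3, b2, h4, h⟩ := h
  exact ⟨b1, h3, b2, h4, a1, h1, a2, h2, h.symm⟩

theorem blowup_nonCrossing {α : Type*} [Fintype α] [LinearOrder α]
    (I : Set α) (hI : IsInterval I) (i : α) (hi : i ∈ I)
    (π : Set (Set α)) (hπ : IsPartitionOn (Iᶜ ∪ {i}) π)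
    (hnc : NonCrossingFam (· < ·) π)
    (S : Set α) (hS : S ∈ π) (hiS : i ∈ S) :
    NonCrossingFam (· < ·) ((π \ {S}) ∪ {S ∪ I}) := by

  classical
  obtain ⟨hne', hdisj, hunion⟩ := hπ
  have hBsub : ∀ B ∈ π, B ≠ S → ∀ b ∈ B, b ∉ I := by
    intro B hB hBS b hb hbI
    have hbU : b ∈ Iᶜ ∪ {i} := hunion ▸ Set.mem_sUnion.2 ⟨B, hB, hb⟩
    rcases hbU with h | h
    · exact h hbI
    · exact (hdisj B hB S hS hBS).ne_of_mem hb hiS (by simpa using h)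
  have key : ∀ B ∈ π, B ≠ S → ¬ Crosses (· < ·) (S ∪ I) B := by
    rintro B hB hBS ⟨a1, ha1, a2, ha2, b1, hb1, b2, hb2, hcr⟩
    have hb1I := hBsub B hB hBS b1 hb1
    have hb2I := hBsub B hB hBS b2 hb2
    set f : α → α := fun a => if a ∈ I then i else a with hf
    have hfS : ∀ a ∈ S ∪ I, f a ∈ S := by
      intro a ha
      by_cases h : a ∈ I
      · simpa [hf, h] using hiS
      · rcases ha with h' | h'
        · simpa [hf, h]
        · exact absurd h' h
    have hlt1 : ∀ a, ∀ b ∉ I, a < b → f a < b := by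
      intro a b hbI hab
      by_cases h : a ∈ I
      · simp only [hf, if_pos h]
        rcases lt_trichotomy i b with h' | h' | h'
        · exact h'
        · exact absurd (h' ▸ hi) hbI
        · exact absurd (hI a h i hi b hab h') hbI
      · simpa [hf, h]
    have hlt2 : ∀ a, ∀ b ∉ I, b < a → b < f a := by
      intro a b hbI hab
      by_cases h : a ∈ I
      · simp only [hf, if_pos h]
        rcases lt_trichotomy b i with h' | h' | h'
        · exact h'
        · exact absurd (h' ▸ hi) hbI
        · exact absurd (hI i hi a h b h' hab) hbI
      · simpa [hf, h]
    refine hnc S hS B hB (Ne.symm hBS)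
      ⟨f a1, hfS a1 ha1, f a2, hfS a2 ha2, b1, hb1, b2, hb2, ?_⟩
    rcases hcr with ⟨h1, h2, h3⟩ | ⟨h1, h2, h3⟩
    · exact Or.inl ⟨hlt1 a1 b1 hb1I h1, hlt2 a2 b1 hb1I h2, hlt1 a2 b2 hb2I h3⟩
    · exact Or.inr ⟨hlt2 a1 b1 hb1I h1, hlt1 a1 b2 hb2I h2, hlt2 a2 b2 hb2I h3⟩
  intro A hA B hB hAB hcr
  rcases hA with ⟨hAπ, hAS⟩ | hA <;> rcases hB with ⟨hBπ, hBS⟩ | hBeq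
  · exact hnc A hAπ B hBπ hAB hcr
  · exact key A hAπ (fun h => hAS h) (hBeq ▸ crosses_symm hcr)
  · exact key B hBπ (fun h => hBS h) (hA ▸ hcr)
  · exact hAB (hA.trans hBeq.symm)
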